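/- Let n₁ ≥ n₂ ≥ 1 be integers, let k be an integer with 1 ≤ k ≤ n₂, and let μ₁, μ₂, μ_N, α be real numbers. Set μ = (n₁·μ₁ + n₂·μ₂)/(n₁+n₂). Assume that (i) α·n₁ ≤ (n₁+n₂)·(μ − μ_N), and (ii) (2n₂·μ₂ − k·μ_N)/(2n₂−k) + α·n₂/(2n₂−k) ≤ μ + α·n₂/(n₁+n₂). Then α ≤ 2n₁n₂·(μ₁−μ₂)/(n₂(n₁−n₂) + k(n₁+n₂)). (This is the quantitative content of the bound on the rank of the kernel of φ for an α-semistable triple: inequality (i) is the α-semistability condition applied to the subtriple (0,N,0) with N = ker φ of rank k and slope μ_N, and inequality (ii) is the α-semistability condition applied to the subtriple (im φ, E₂, φ).) -/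

import Mathlib

/-- Quantitative content of the bound on the rank of the kernel of `φ` for an
`α`-semistable triple: if `n₁ ≥ n₂ ≥ 1`, `1 ≤ k ≤ n₂`, `μ = (n₁μ₁ + n₂μ₂)/(n₁+n₂)`,
(i) `α n₁ ≤ (n₁+n₂)(μ - μ_N)` and
(ii) `(2n₂μ₂ - kμ_N)/(2n₂-k) + αn₂/(2n₂-k) ≤ μ + αn₂/(n₁+n₂)`,
then `α ≤ 2n₁n₂(μ₁-μ₂)/(n₂(n₁-n₂) + k(n₁+n₂))`. -/
theorem kernel_rank_bound
    (n₁ n₂ k : ℤ) (hn : n₁ ≥ n₂) (hn₂ : n₂ ≥ 1) (hk₁ : 1 ≤ k) (hk₂ : k ≤ n₂)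
    (μ₁ μ₂ μN α : ℝ)
    (μ : ℝ) (hμ : μ = ((n₁ : ℝ) * μ₁ + (n₂ : ℝ) * μ₂) / ((n₁ : ℝ) + (n₂ : ℝ)))
    (h1 : α * (n₁ : ℝ) ≤ ((n₁ : ℝ) + (n₂ : ℝ)) * (μ - μN))
    (h2 : (2 * (n₂ : ℝ) * μ₂ - (k : ℝ) * μN) / (2 * (n₂ : ℝ) - (k : ℝ))
        + α * (n₂ : ℝ) / (2 * (n₂ : ℝ) - (k : ℝ))
      ≤ μ + α * (n₂ : ℝ) / ((n₁ : ℝ) + (n₂ : ℝ))) :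
    α ≤ 2 * (n₁ : ℝ) * (n₂ : ℝ) * (μ₁ - μ₂)
        / ((n₂ : ℝ) * ((n₁ : ℝ) - (n₂ : ℝ)) + (k : ℝ) * ((n₁ : ℝ) + (n₂ : ℝ))) := by
  have hn1 : (1:ℝ) ≤ (n₂:ℝ) := by exact_mod_cast hn₂
  have hnn : (n₂:ℝ) ≤ (n₁:ℝ) := by exact_mod_cast hn
  have hk1 : (1:ℝ) ≤ (k:ℝ) := by exact_mod_cast hk₁
  have hk2 : (k:ℝ) ≤ (n₂:ℝ) := by exact_mod_cast hk₂
  have hD1 : (0:ℝ) < (n₁:ℝ) + (n₂:ℝ) := by linarith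
  have hD2 : (0:ℝ) < 2 * (n₂:ℝ) - (k:ℝ) := by linarith
  have hD3 : (0:ℝ) < (n₂:ℝ) * ((n₁:ℝ) - (n₂:ℝ)) + (k:ℝ) * ((n₁:ℝ) + (n₂:ℝ)) := by
    nlinarith
  subst hμ
  rw [le_div_iff₀ hD3]
  rw [← add_div, ← add_div, div_le_div_iff₀ hD2 hD1] at h2
  have h1' : (k:ℝ) * (α * (n₁:ℝ)) ≤ (k:ℝ) * (((n₁:ℝ) + (n₂:ℝ)) *
      (((n₁:ℝ) * μ₁ + (n₂:ℝ) * μ₂) / ((n₁:ℝ) + (n₂:ℝ)) - μN)) := by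
    apply mul_le_mul_of_nonneg_left h1 (by linarith)
  field_simp at h1' h2
  nlinarith [h2, h1', mul_pos hD1 hD2]
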